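/- Let G be a finite supersolvable group and p a prime dividing |G|. Then the quotient G/O_{p'}(G) has a normal p-subgroup N such that (G/O_{p'}(G))/N is abelian of exponent dividing p−1. -/

import Mathlib

/-- A group is supersolvable if it has a normal series `1 = H 0 ≤ ⋯ ≤ H n = G`
with each term normal in `G` and each successive quotient cyclic (equivalently,
each term is generated by the previous one together with a single element). -/
def IsSupersolvable (G : Type*) [Group G] : Prop :=
  ∃ (n : ℕ) (c : Fin (n + 1) → Subgroup G),
    c 0 = ⊥ ∧ c (Fin.last n) = ⊤ ∧ (∀ i, (c i).Normal) ∧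
    ∀ i : Fin n, ∃ x : G, c i.succ = c i.castSucc ⊔ Subgroup.closure {x}

/-- `O` is the `p'`-core of `G`: the largest normal subgroup of `G`
whose order is coprime to `p`. -/
def IsPPrimeCore (p : ℕ) {G : Type*} [Group G] (O : Subgroup G) : Prop :=
  O.Normal ∧ Nat.Coprime p (Nat.card O) ∧
    ∀ N : Subgroup G, N.Normal → Nat.Coprime p (Nat.card N) → N ≤ O

open scoped commutatorElement

section Helpers

variable {G : Type*} [Group G]

lemma isSupersolvable_of_surjective {H : Type*} [Group H] (f : G →* H)
    (hf : Function.Surjective f) (h : IsSupersolvable G) : IsSupersolvable H := by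
  obtain ⟨n, c, h0, hl, hn, hs⟩ := h
  refine ⟨n, fun i => (c i).map f, ?_, ?_, fun i => (hn i).map f hf, fun i => ?_⟩
  · show (c 0).map f = ⊥
    rw [h0, Subgroup.map_bot]
  · show (c (Fin.last n)).map f = ⊤
    rw [hl, Subgroup.map_top_of_surjective f hf]
  · obtain ⟨x, hx⟩ := hs i
    refine ⟨f x, ?_⟩
    show (c i.succ).map f = (c i.castSucc).map f ⊔ Subgroup.closure {f x}
    rw [hx, Subgroup.map_sup, MonoidHom.map_closure, Set.image_singleton]

lemma mulAut_mul_comm {H : Type*} [Group H] [IsCyclic H] (σ τ : MulAut H) :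
    σ * τ = τ * σ := by
  obtain ⟨m, hm⟩ := MonoidHom.map_cyclic σ.toMonoidHom
  obtain ⟨k, hk⟩ := MonoidHom.map_cyclic τ.toMonoidHom
  ext x
  show σ (τ x) = τ (σ x)
  rw [show σ (τ x) = (τ x) ^ m from hm (τ x), show τ x = x ^ k from hk x,
    show σ x = x ^ m from hm x, show τ (x ^ m) = (x ^ m) ^ k from hk _,
    ← zpow_mul, ← zpow_mul, mul_comm]

lemma orderOf_dvd_card_of_mem [Finite G] {S : Subgroup G} {g : G} (hg : g ∈ S) :
    orderOf g ∣ Nat.card S := by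
  have := orderOf_dvd_natCard (⟨g, hg⟩ : S)
  rwa [Subgroup.orderOf_mk] at this

lemma coprime_card_of_forall_orderOf_ne [Finite G] {p : ℕ} (hp : p.Prime)
    (S : Subgroup G) (h : ∀ g, g ∈ S → orderOf g ≠ p) : Nat.Coprime p (Nat.card S) := by
  rw [hp.coprime_iff_not_dvd]
  intro hd
  haveI : Fact p.Prime := ⟨hp⟩
  obtain ⟨g, hg⟩ := exists_prime_orderOf_dvd_card' (G := S) p hd
  refine h g g.2 ?_
  rw [Subgroup.orderOf_coe, hg]

lemma exists_ne_one_zpowers_normal [Nontrivial G] (h : IsSupersolvable G) :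
    ∃ x : G, x ≠ 1 ∧ (Subgroup.zpowers x).Normal := by
  obtain ⟨n, c, h0, hl, hn, hs⟩ := h
  suffices H : ∀ k : ℕ, ∀ hk : k < n + 1, c ⟨k, hk⟩ ≠ ⊥ →
      ∃ x : G, x ≠ 1 ∧ (Subgroup.zpowers x).Normal by
    refine H n n.lt_succ_self ?_
    have : (⟨n, n.lt_succ_self⟩ : Fin (n + 1)) = Fin.last n := rfl
    rw [this, hl]
    intro htop
    obtain ⟨g, hg⟩ := exists_ne (1 : G)
    exact hg (Subgroup.mem_bot.mp (htop ▸ Subgroup.mem_top g))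
  intro k
  induction k with
  | zero =>
    intro hk hne
    exact absurd (show c ⟨0, hk⟩ = ⊥ from h0) hne
  | succ k ih =>
    intro hk hne
    have hkn : k < n := Nat.lt_of_succ_lt_succ hk
    by_cases hb : c ⟨k, Nat.lt_of_succ_lt hk⟩ = ⊥
    · obtain ⟨x, hx⟩ := hs ⟨k, hkn⟩
      have hsucc : (⟨k, hkn⟩ : Fin n).succ = ⟨k + 1, hk⟩ := rfl
      have hcast : (⟨k, hkn⟩ : Fin n).castSucc = ⟨k, Nat.lt_of_succ_lt hk⟩ := rfl
      rw [hsucc, hcast, hb, bot_sup_eq] at hx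
      refine ⟨x, ?_, ?_⟩
      · rintro rfl
        rw [Subgroup.closure_singleton_one] at hx
        exact hne hx
      · rw [Subgroup.zpowers_eq_closure, ← hx]
        exact hn _
    · exact ih (Nat.lt_of_succ_lt hk) hb

set_option maxHeartbeats 1000000 in
/-- Key induction lemma: a finite supersolvable group has normal subgroups `Q ≤ K` with
`Q` of order coprime to `p`, `K/Q` a `p`-group, and `G/K` abelian of exponent dividing
`p - 1`. -/
lemma key_lemma (p : ℕ) (hp : p.Prime) :
    ∀ (n : ℕ) (G : Type u) [Group G] [Finite G], Nat.card G ≤ n → IsSupersolvable G →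
    ∃ Q K : Subgroup G, Q.Normal ∧ K.Normal ∧ Q ≤ K ∧ Nat.Coprime p (Nat.card Q) ∧
      (∀ x ∈ K, ∃ m : ℕ, x ^ p ^ m ∈ Q) ∧ (∀ x y : G, ⁅x, y⁆ ∈ K) ∧
      (∀ x : G, x ^ (p - 1) ∈ K) := by
  intro n
  induction n with
  | zero =>
    intro G _ _ hcard _
    exact absurd (Nat.card_pos (α := G)) (by omega)
  | succ n ih =>
    intro G _ _ hcard hss
    rcases subsingleton_or_nontrivial G with hs | hs
    · refine ⟨⊤, ⊤, inferInstance, inferInstance, le_rfl, ?_, fun x _ => ⟨0, Subgroup.mem_top _⟩,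
        fun x y => Subgroup.mem_top _, fun x => Subgroup.mem_top _⟩
      have : Nat.card (⊤ : Subgroup G) = 1 := by
        rw [Subgroup.card_top]
        exact Nat.card_of_subsingleton 1
      rw [this]
      exact Nat.coprime_one_right p
    · -- find a normal subgroup B = zpowers w of prime order q
      obtain ⟨x, hx1, hxn⟩ := exists_ne_one_zpowers_normal hss
      set e := orderOf x with he
      have he1 : e ≠ 1 := fun h => hx1 (orderOf_eq_one_iff.mp h)
      have hepos : 0 < e := (isOfFinOrder_of_finite x).orderOf_pos
      set q := e.minFac with hqdef
      have hq : q.Prime := Nat.minFac_prime he1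
      have hqd : q ∣ e := Nat.minFac_dvd e
      set w := x ^ (e / q) with hw
      have horder : orderOf w = q := by
        rw [hw, orderOf_pow, ← he, Nat.gcd_eq_right (Nat.div_dvd_of_dvd hqd),
          Nat.div_div_self hqd hepos.ne']
      set B := Subgroup.zpowers w with hBdef
      have hwA : w ∈ Subgroup.zpowers x := by
        rw [hw]
        exact Subgroup.pow_mem _ (Subgroup.mem_zpowers x) _
      have hBA : B ≤ Subgroup.zpowers x := Subgroup.zpowers_le.mpr hwA
      have htor : ∀ a ∈ Subgroup.zpowers x, a ^ q = 1 → a ∈ B := by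
        intro a ha haq
        obtain ⟨k, hk⟩ := Subgroup.mem_zpowers_iff.mp ha
        have h1 : x ^ (k * q) = 1 := by
          rw [zpow_mul, hk, zpow_natCast, haq]
        have h2 : (e : ℤ) ∣ k * q := orderOf_dvd_iff_zpow_eq_one.mpr h1
        obtain ⟨t, ht⟩ := h2
        have heq : (e : ℤ) = (q : ℤ) * ((e / q : ℕ) : ℤ) := by
          rw [← Nat.cast_mul, Nat.mul_div_cancel' hqd]
        have hk2 : k = ((e / q : ℕ) : ℤ) * t := by
          have hq0 : (q : ℤ) ≠ 0 := Int.natCast_ne_zero.mpr hq.ne_zero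
          have : k * (q : ℤ) = (q : ℤ) * (((e / q : ℕ) : ℤ) * t) := by
            rw [ht, heq]; ring
          rw [mul_comm] at this
          exact mul_left_cancel₀ hq0 this
        rw [Subgroup.mem_zpowers_iff]
        refine ⟨t, ?_⟩
        rw [hw, ← zpow_natCast x (e / q), ← zpow_mul, ← hk2, hk]
      have hBq : ∀ b ∈ B, b ^ q = 1 := by
        intro b hb
        have := orderOf_dvd_of_mem_zpowers hb
        rw [horder] at this
        exact orderOf_dvd_iff_pow_eq_one.mp this
      have hBnormal : B.Normal := by
        constructor
        intro b hb g
        refine htor _ (hxn.conj_mem _ (hBA hb) g) ?_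
        rw [conj_pow, hBq b hb, mul_one, mul_inv_cancel]
      have hBcard : Nat.card B = q := by
        rw [hBdef, Nat.card_zpowers, horder]
      have hBcomm : ∀ b ∈ B, ∀ b' ∈ B, b * b' = b' * b := by
        intro b hb b' hb'
        obtain ⟨s, hs⟩ := Subgroup.mem_zpowers_iff.mp hb
        obtain ⟨s', hs'⟩ := Subgroup.mem_zpowers_iff.mp hb'
        rw [← hs, ← hs', ← zpow_add, ← zpow_add, add_comm]
      haveI := hBnormal
      -- quotient by B and apply induction hypothesis
      set π := QuotientGroup.mk' B with hπ
      have hπs : Function.Surjective π := QuotientGroup.mk'_surjective B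
      have hker : ∀ g : G, π g = 1 ↔ g ∈ B := fun g => QuotientGroup.eq_one_iff g
      have hcard2 : Nat.card (G ⧸ B) ≤ n := by
        have h1 : Nat.card G = Nat.card (G ⧸ B) * Nat.card B :=
          Subgroup.card_eq_card_quotient_mul_card_subgroup B
        have h2 : 1 < Nat.card B := by rw [hBcard]; exact hq.one_lt
        have h3 : 0 < Nat.card (G ⧸ B) := Nat.card_pos
        nlinarith [hcard, h1, h2, h3]
      obtain ⟨Q', K', hQ'n, hK'n, hQ'K', hcop', hpow', hcomm', hp1'⟩ :=
        ih (G ⧸ B) hcard2 (isSupersolvable_of_surjective π hπs hss)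
      set Q₀ := Q'.comap π with hQ₀
      set K := K'.comap π with hK
      haveI hQ₀n : Q₀.Normal := hQ'n.comap π
      haveI hKn : K.Normal := hK'n.comap π
      have hQ₀K : Q₀ ≤ K := Subgroup.comap_mono hQ'K'
      have hBQ₀ : B ≤ Q₀ := by
        intro b hb
        have : π b = 1 := (hker b).mpr hb
        show π b ∈ Q'
        rw [this]; exact Q'.one_mem
      have hKmem : ∀ z : G, z ∈ K ↔ π z ∈ K' := fun z => Iff.rfl
      have hQ₀mem : ∀ z : G, z ∈ Q₀ ↔ π z ∈ Q' := fun z => Iff.rfl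
      -- dichotomy on q
      by_cases hqp : q = p
      · -- q = p : refine using the action on B
        subst hqp
        haveI : Fact q.Prime := ⟨hq⟩
        haveI hcyc : IsCyclic B := isCyclic_of_prime_card hBcard
        set φ := (MulAut.conjNormal : G →* MulAut B) with hφ
        set C := φ.ker with hC
        haveI hCn : C.Normal := φ.normal_ker
        have hCmem : ∀ g ∈ C, ∀ b ∈ B, g * b * g⁻¹ = b := by
          intro g hg b hb
          have h1 : φ g = 1 := hg
          have h2 : (φ g ⟨b, hb⟩ : G) = g * b * g⁻¹ := MulAut.conjNormal_apply g ⟨b, hb⟩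
          rw [h1] at h2
          simpa using h2.symm
        have hCmem' : ∀ g : G, (∀ b ∈ B, g * b * g⁻¹ = b) → g ∈ C := by
          intro g hg
          show φ g = 1
          ext b
          show ((φ g) b : G) = (b : G)
          rw [MulAut.conjNormal_apply]
          exact hg b b.2
        have hBC : B ≤ C := by
          intro b hb
          refine hCmem' b fun b' hb' => ?_
          rw [hBcomm b hb b' hb', mul_assoc, mul_inv_cancel, mul_one]
        have hcomm_C : ∀ x y : G, ⁅x, y⁆ ∈ C := by
          intro a b
          show φ ⁅a, b⁆ = 1
          rw [map_commutatorElement, commutatorElement_eq_one_iff_mul_comm]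
          exact mulAut_mul_comm _ _
        have hcardAut : Nat.card (MulAut B) = q - 1 := by
          rw [IsCyclic.card_mulAut, hBcard, Nat.totient_prime hq]
        have hpow_C : ∀ a : G, a ^ (q - 1) ∈ C := by
          intro a
          show φ (a ^ (q - 1)) = 1
          rw [map_pow, ← hcardAut, pow_card_eq_one']
        -- the subgroup R and Schur–Zassenhaus
        set R := Q₀ ⊓ C with hR
        haveI hRn : R.Normal := Subgroup.normal_inf_normal Q₀ C
        have hBR : B ≤ R := le_inf hBQ₀ hBC
        have hcentral : ∀ r ∈ R, ∀ b ∈ B, r * b = b * r := by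
          intro r hr b hb
          have := hCmem r hr.2 b hb
          calc r * b = r * b * r⁻¹ * r := by group
          _ = b * r := by rw [this]
        set B' := B.subgroupOf R with hB'
        haveI hB'n : B'.Normal := Subgroup.normal_subgroupOf
        set f := π.comp R.subtype with hf
        have hkerf : f.ker = B' := by
          ext r
          show π (r : G) = 1 ↔ r ∈ B'
          rw [hker, Subgroup.mem_subgroupOf]
        have hrange : f.range ≤ Q' := by
          rintro _ ⟨r, rfl⟩
          exact (hQ₀mem (r : G)).mp r.2.1
        have hcardquot : Nat.card (R ⧸ B') ∣ Nat.card Q' := by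
          have e1 : Nat.card (R ⧸ B') = Nat.card f.range := by
            rw [← hkerf]
            exact Nat.card_congr (QuotientGroup.quotientKerEquivRange f).toEquiv
          rw [e1]
          exact Subgroup.card_dvd_of_le hrange
        have hcopquot : Nat.Coprime q (Nat.card (R ⧸ B')) :=
          Nat.Coprime.coprime_dvd_right hcardquot hcop'
        have hcardB' : Nat.card B' = q := by
          rw [← hBcard]
          exact Nat.card_congr (Subgroup.subgroupOfEquivOfLe hBR).toEquiv
        have hcopSZ : Nat.Coprime (Nat.card B') (Nat.card (R ⧸ B')) := by
          rw [hcardB']; exact hcopquot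
        obtain ⟨Q'', hQ''⟩ := Subgroup.exists_right_complement'_of_coprime hcopSZ
        -- cardinalities
        have hcardR : Nat.card B' * Nat.card Q'' = Nat.card R := hQ''.card_mul
        have hLagrange : Nat.card R = Nat.card (R ⧸ B') * Nat.card B' :=
          Subgroup.card_eq_card_quotient_mul_card_subgroup B'
        have hB'pos : 0 < Nat.card B' := Nat.card_pos
        have hcardQ'' : Nat.card Q'' = Nat.card (R ⧸ B') := by
          nlinarith [hcardR, hLagrange, hB'pos]
        have hcopQ'' : Nat.Coprime q (Nat.card Q'') := by rw [hcardQ'']; exact hcopquot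
        -- Q'' is normal in R
        haveI hQ''n : Q''.Normal := by
          constructor
          intro k hk r
          obtain ⟨⟨b, y⟩, hby⟩ := (hQ''.existsUnique r).exists
          have hr : r = (b : R) * (y : R) := hby.symm
          have hbB : ((b : R) : G) ∈ B := b.2
          have hyq : (y : R) * k * (y : R)⁻¹ ∈ Q'' := Q''.mul_mem (Q''.mul_mem y.2 hk) (Q''.inv_mem y.2)
          have hcomm2 : (b : R) * ((y : R) * k * (y : R)⁻¹) = ((y : R) * k * (y : R)⁻¹) * (b : R) := by
            have := hcentral ((y : R) * k * (y : R)⁻¹ : R) ((y : R) * k * (y : R)⁻¹ : R).2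
              ((b : R) : G) hbB
            exact Subtype.ext this.symm
          have : r * k * r⁻¹ = (y : R) * k * (y : R)⁻¹ := by
            rw [hr]
            have expand : (b : R) * (y : R) * k * ((b : R) * (y : R))⁻¹ =
                (b : R) * ((y : R) * k * (y : R)⁻¹) * (b : R)⁻¹ := by
              simp only [mul_inv_rev, mul_assoc]
            rw [expand, hcomm2, mul_assoc, mul_inv_cancel, mul_one]
          rw [this]
          exact hyq
        have hcardRQ : Nat.card (R ⧸ Q'') = Nat.card B' := by
          have hLag2 : Nat.card R = Nat.card (R ⧸ Q'') * Nat.card Q'' :=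
            Subgroup.card_eq_card_quotient_mul_card_subgroup Q''
          have hQ''pos : 0 < Nat.card Q'' := Nat.card_pos
          nlinarith [hcardR, hLag2, hQ''pos]
        -- the final Q
        set Qfin := Q''.map R.subtype with hQfin
        have hmem_iff : ∀ g : G, g ∈ Qfin ↔ ∃ hg : g ∈ R, (⟨g, hg⟩ : R) ∈ Q'' := by
          intro g
          constructor
          · rintro ⟨y, hy, rfl⟩
            exact ⟨y.2, by simpa using hy⟩
          · rintro ⟨hg, hmem⟩
            exact ⟨⟨g, hg⟩, hmem, rfl⟩
        have hchar : ∀ g : G, g ∈ Qfin ↔ g ∈ R ∧ ¬ q ∣ orderOf g := by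
          intro g
          rw [hmem_iff]
          constructor
          · rintro ⟨hg, hmem⟩
            refine ⟨hg, fun hdvd => ?_⟩
            have h1 : orderOf g ∣ Nat.card Q'' := by
              have := orderOf_dvd_card_of_mem hmem
              rwa [Subgroup.orderOf_mk] at this
            have : q ∣ Nat.card Q'' := hdvd.trans h1
            exact (hq.coprime_iff_not_dvd.mp hcopQ'') this
          · rintro ⟨hg, hord⟩
            refine ⟨hg, ?_⟩
            set ybar : R ⧸ Q'' := QuotientGroup.mk (⟨g, hg⟩ : R) with hybar
            have h1 : orderOf ybar ∣ orderOf g := by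
              have : orderOf ybar ∣ orderOf (⟨g, hg⟩ : R) :=
                orderOf_map_dvd (QuotientGroup.mk' Q'') _
              rwa [Subgroup.orderOf_mk] at this
            have h2 : orderOf ybar ∣ q := by
              have := orderOf_dvd_natCard ybar
              rwa [hcardRQ, hcardB'] at this
            rcases (Nat.dvd_prime hq).mp h2 with h | h
            · have : ybar = 1 := orderOf_eq_one_iff.mp h
              rwa [hybar, QuotientGroup.eq_one_iff] at this
            · exact absurd (h ▸ h1) hord
        haveI hQfinN : Qfin.Normal := by
          constructor
          intro g hg r
          rw [hchar] at hg ⊢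
          refine ⟨hRn.conj_mem g hg.1 r, ?_⟩
          have : orderOf (r * g * r⁻¹) = orderOf g :=
            (SemiconjBy.orderOf_eq r (show r * g = (r * g * r⁻¹) * r by simp only [inv_mul_cancel_right] : SemiconjBy r g (r * g * r⁻¹))).symm
          rw [this]
          exact hg.2
        have hQfinR : Qfin ≤ R := Subgroup.map_subtype_le Q''
        have hQfincop : Nat.Coprime q (Nat.card Qfin) := by
          refine coprime_card_of_forall_orderOf_ne hq Qfin fun g hg hord => ?_
          exact ((hchar g).mp hg).2 (hord ▸ dvd_refl q)
        refine ⟨Qfin, K ⊓ C, hQfinN, Subgroup.normal_inf_normal K C,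
          le_trans hQfinR (inf_le_inf_right C hQ₀K), hQfincop, ?_, ?_, ?_⟩
        · -- p-power condition
          rintro z ⟨hzK, hzC⟩
          obtain ⟨m, hm⟩ := hpow' (π z) hzK
          have hy : z ^ q ^ m ∈ R := by
            refine ⟨?_, C.pow_mem hzC _⟩
            show π (z ^ q ^ m) ∈ Q'
            rw [map_pow]
            exact hm
          refine ⟨m + 1, ?_⟩
          have step : (z ^ q ^ m) ^ q ∈ Qfin := by
            set yR : R := ⟨z ^ q ^ m, hy⟩ with hyR
            have h1 : (QuotientGroup.mk yR : R ⧸ Q'') ^ q = 1 := by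
              rw [← hcardB', ← hcardRQ, pow_card_eq_one']
            have h2 : yR ^ q ∈ Q'' := by
              rwa [← QuotientGroup.mk_pow, QuotientGroup.eq_one_iff] at h1
            exact ⟨yR ^ q, h2, rfl⟩
          rwa [pow_succ, pow_mul]
        · intro a b
          exact ⟨hcomm' (π a) (π b), hcomm_C a b⟩
        · intro a
          refine ⟨?_, hpow_C a⟩
          show π (a ^ (q - 1)) ∈ K'
          rw [map_pow]
          exact hp1' (π a)
      · -- q ≠ p : just pull back
        refine ⟨Q₀, K, hQ₀n, hKn, hQ₀K, ?_, ?_, ?_, ?_⟩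
        · refine coprime_card_of_forall_orderOf_ne hp Q₀ fun g hg hord => ?_
          have hπg : (π g) ^ p = 1 := by
            rw [← map_pow, ← hord, pow_orderOf_eq_one, map_one]
          have h2 : orderOf (π g) ∣ p := orderOf_dvd_iff_pow_eq_one.mpr hπg
          rcases (Nat.dvd_prime hp).mp h2 with h | h
          · have : g ∈ B := (hker g).mp (orderOf_eq_one_iff.mp h)
            have hdvd : orderOf g ∣ q := by
              have := orderOf_dvd_card_of_mem this
              rwa [hBcard] at this
            rw [hord] at hdvd
            exact hqp ((Nat.prime_dvd_prime_iff_eq hp hq).mp hdvd).symm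
          · have : p ∣ Nat.card Q' := by
              rw [← h]
              exact orderOf_dvd_card_of_mem ((hQ₀mem g).mp hg)
            exact (hp.coprime_iff_not_dvd.mp hcop') this
        · intro z hz
          obtain ⟨m, hm⟩ := hpow' (π z) hz
          refine ⟨m, ?_⟩
          show π (z ^ p ^ m) ∈ Q'
          rw [map_pow]
          exact hm
        · intro a b
          show π ⁅a, b⁆ ∈ K'
          rw [map_commutatorElement]
          exact hcomm' _ _
        · intro a
          show π (a ^ (p - 1)) ∈ K'
          rw [map_pow]
          exact hp1' (π a)

end Helpers

/-- Let `G` be a finite supersolvable group and `p` a prime dividing `|G|`. Then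
`G/O_{p'}(G)` has a normal `p`-subgroup `N` such that the quotient by `N` is
abelian of exponent dividing `p-1` (expressed by: all commutators and all
`(p-1)`-st powers of `G/O_{p'}(G)` lie in `N`). -/
theorem quotient_pPrimeCore_mem_Hp {G : Type*} [Group G] [Finite G]
    (hG : IsSupersolvable G) (p : ℕ) (hp : p.Prime) (hpd : p ∣ Nat.card G)
    (O : Subgroup G) [O.Normal] (hO : IsPPrimeCore p O) :
    ∃ N : Subgroup (G ⧸ O), N.Normal ∧ IsPGroup p N ∧
      (∀ x y : G ⧸ O, ⁅x, y⁆ ∈ N) ∧ (∀ x : G ⧸ O, x ^ (p - 1) ∈ N) := by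
  set π := QuotientGroup.mk' O with hπ
  have hπs : Function.Surjective π := QuotientGroup.mk'_surjective O
  have hss : IsSupersolvable (G ⧸ O) := isSupersolvable_of_surjective π hπs hG
  obtain ⟨Q, K, hQn, hKn, hQK, hcop, hpow, hcomm, hp1⟩ :=
    key_lemma p hp (Nat.card (G ⧸ O)) (G ⧸ O) le_rfl hss
  -- Q must be trivial
  have hQbot : Q = ⊥ := by
    set N₀ := Q.comap π with hN₀
    haveI : N₀.Normal := hQn.comap π
    have hN₀cop : Nat.Coprime p (Nat.card N₀) := by
      refine coprime_card_of_forall_orderOf_ne hp N₀ fun g hg hord => ?_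
      have hπg : (π g) ^ p = 1 := by
        rw [← map_pow, ← hord, pow_orderOf_eq_one, map_one]
      have h2 : orderOf (π g) ∣ p := orderOf_dvd_iff_pow_eq_one.mpr hπg
      rcases (Nat.dvd_prime hp).mp h2 with h | h
      · have hgO : g ∈ O := (QuotientGroup.eq_one_iff g).mp (orderOf_eq_one_iff.mp h)
        have : p ∣ Nat.card O := by
          rw [← hord]
          exact orderOf_dvd_card_of_mem hgO
        exact (hp.coprime_iff_not_dvd.mp hO.2.1) this
      · have : p ∣ Nat.card Q := by
          rw [← h]
          exact orderOf_dvd_card_of_mem hg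
        exact (hp.coprime_iff_not_dvd.mp hcop) this
    have hle : N₀ ≤ O := hO.2.2 N₀ inferInstance hN₀cop
    rw [eq_bot_iff]
    intro z hz
    obtain ⟨g, rfl⟩ := hπs z
    have : g ∈ O := hle hz
    show π g ∈ ⊥
    rw [Subgroup.mem_bot]
    exact (QuotientGroup.eq_one_iff g).mpr this
  refine ⟨K, hKn, ?_, hcomm, hp1⟩
  intro g
  obtain ⟨m, hm⟩ := hpow (g : G ⧸ O) g.2
  refine ⟨m, ?_⟩
  rw [hQbot, Subgroup.mem_bot] at hm
  exact Subtype.ext (by simpa using hm)
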